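/- Individual optimality under equilibrium prices: Fix k and suppose dual multipliers (p_0*, p_k*, q_k*, γ_k*, α_k*, β_k*) satisfy the dual feasibility conditions c_k − a_k p_0* − g_k q_k* − 2β_k* ≥ 0, d_k − h_k q_k* − p_k* ≥ 0, r_k − γ_k* − α_k* ≥ 0, (γ_k*, α_k*, β_k*) ∈ K³, q_k* ≥ 0, and a primal point (x_k*, y_k*, z_k*) with x_k*, y_k* ≥ 0, z_k* ∈ {0,1}, g_k x_k* + h_k z_k* ≥ b_k, (y_k*+1, y_k*−1, 2(x_k*−x_k^0)) ∈ K³, satisfying the complementarity conditions: (c_k − a_k p_0* − g_k q_k* − 2β_k*)·x_k* = 0, (d_k − h_k q_k* − p_k*)·z_k* = 0, (r_k − γ_k* − α_k*)·y_k* = 0, q_k*·(g_k x_k* + h_k z_k* − b_k) = 0, and (y_k*+1, y_k*−1, 2(x_k*−x_k^0))ᵀ(γ_k*, α_k*, β_k*) = 0. Then (x_k*, y_k*, z_k*) minimizes c_k x_k + d_k z_k + r_k y_k − p_0* a_k x_k − p_k* z_k over all (x_k, y_k, z_k) with x_k, y_k ≥ 0, z_k ∈ {0,1}, g_k x_k +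 h_k z_k ≥ b_k, and (y_k+1, y_k−1, 2(x_k−x_k^0)) ∈ K³. -/
import Mathlib


/-- Membership in the second-order cone `K³`. -/
def SOC3 (w0 w1 w2 : ℝ) : Prop := w0 ≥ Real.sqrt (w1 ^ 2 + w2 ^ 2)


lemma soc_dual {a b c d e f : ℝ} (h1 : SOC3 a b c) (h2 : SOC3 d e f) :
    0 ≤ a * d + b * e + c * f := by
  unfold SOC3 at h1 h2
  have hs : Real.sqrt (b ^ 2 + c ^ 2) ^ 2 = b ^ 2 + c ^ 2 :=
    Real.sq_sqrt (by positivity)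
  have ht : Real.sqrt (e ^ 2 + f ^ 2) ^ 2 = e ^ 2 + f ^ 2 :=
    Real.sq_sqrt (by positivity)
  have hs0 : 0 ≤ Real.sqrt (b ^ 2 + c ^ 2) := Real.sqrt_nonneg _
  have ht0 : 0 ≤ Real.sqrt (e ^ 2 + f ^ 2) := Real.sqrt_nonneg _
  nlinarith [sq_nonneg (b * f - c * e), sq_nonneg (b * e + c * f),
    mul_nonneg hs0 ht0, sq_nonneg (Real.sqrt (b ^ 2 + c ^ 2) * Real.sqrt (e ^ 2 + f ^ 2) - (b * e + c * f)),
    mul_le_mul h1 h2 ht0 (le_trans hs0 h1)]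

theorem individual_optimality (c d a g h b x0 r : ℝ) (hr : 0 < r)
    (p0s ps qs γs αs βs : ℝ)
    (hd1 : c - a * p0s - g * qs - 2 * βs ≥ 0)
    (hd2 : d - h * qs - ps ≥ 0)
    (hd3 : r - γs - αs ≥ 0)
    (hd4 : SOC3 γs αs βs)
    (hd5 : 0 ≤ qs)
    (xs ys zs : ℝ)
    (hx : 0 ≤ xs) (hy : 0 ≤ ys) (hz : zs = 0 ∨ zs = 1)
    (hop : g * xs + h * zs ≥ b)
    (hcone : SOC3 (ys + 1) (ys - 1) (2 * (xs - x0)))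
    (hc1 : (c - a * p0s - g * qs - 2 * βs) * xs = 0)
    (hc2 : (d - h * qs - ps) * zs = 0)
    (hc3 : (r - γs - αs) * ys = 0)
    (hc4 : qs * (g * xs + h * zs - b) = 0)
    (hc5 : (ys + 1) * γs + (ys - 1) * αs + 2 * (xs - x0) * βs = 0) :
    ∀ x y z : ℝ, 0 ≤ x → 0 ≤ y → (z = 0 ∨ z = 1) →
      g * x + h * z ≥ b → SOC3 (y + 1) (y - 1) (2 * (x - x0)) →
      c * xs + d * zs + r * ys - p0s * (a * xs) - ps * zs ≤
        c * x + d * z + r * y - p0s * (a * x) - ps * z := by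
  intro x y z hx' hy' hz' hop' hcone'
  have key := soc_dual hcone' hd4
  have keys : (ys + 1) * γs + (ys - 1) * αs + 2 * (xs - x0) * βs = 0 := hc5
  have h1 : 0 ≤ (c - a * p0s - g * qs - 2 * βs) * x :=
    mul_nonneg hd1 hx'
  have h2 : 0 ≤ (d - h * qs - ps) * z := mul_nonneg hd2 (by rcases hz' with h|h <;> simp [h])
  have h3 : 0 ≤ (r - γs - αs) * y := mul_nonneg hd3 hy'
  have h4 : 0 ≤ qs * (g * x + h * z - b) := mul_nonneg hd5 (by linarith)
  nlinarith [key, h1, h2, h3, h4]
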